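/- arXiv:1205.2682 — 3 statements merged into one kernel-verified Lean document; each statement's English description precedes it below -/
import Mathlib

section
/- Let c > 0 and let (F_n)_{n≥1} be a sequence of real random variables with E[F_n⁴] < ∞ and E[F_n⁴] ≤ c · (E[F_n²])² for every n. If the laws of F_n converge weakly to some Borel probability measure on ℝ, then sup_{n≥1} E[F_n²] < ∞. -/
open MeasureTheory Filter
open scoped ENNReal

private lemma amgm_aux (a t : ℝ) (ha : 0 ≤ a) (ht : 0 < t) :
    a ≤ a ^ 2 / (2 * t) + t / 2 := by
  rw [← sub_nonneg]
  have h : a ^ 2 / (2 * t) + t / 2 - a = (a - t) ^ 2 / (2 * t) := by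
    field_simp
    ring
  rw [h]
  positivity

/-- If `E[F_n⁴] ≤ c (E[F_n²])²` for every `n` and the laws of `F_n`
converge weakly to a Borel probability measure on `ℝ`, then `sup_n E[F_n²] < ∞`. -/
theorem stmt5 {Ω : Type*} [MeasurableSpace Ω] (P : Measure Ω) [IsProbabilityMeasure P]
    (c : ℝ) (hc : 0 < c) (F : ℕ → Ω → ℝ) (hFm : ∀ n, Measurable (F n))
    (hF4 : ∀ n, MemLp (F n) 4 P)
    (hmom : ∀ n, ∫ ω, (F n ω) ^ 4 ∂P ≤ c * (∫ ω, (F n ω) ^ 2 ∂P) ^ 2)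
    (μ : Measure ℝ) [IsProbabilityMeasure μ]
    (hweak : ∀ φ : ℝ → ℝ, Continuous φ → (∃ C, ∀ x, |φ x| ≤ C) →
      Tendsto (fun n => ∫ ω, φ (F n ω) ∂P) atTop (nhds (∫ x, φ x ∂μ))) :
    ∃ C : ℝ, ∀ n, ∫ ω, (F n ω) ^ 2 ∂P ≤ C := by
  classical
  set m : ℕ → ℝ := fun n => ∫ ω, (F n ω) ^ 2 ∂P with hm
  -- integrability of powers
  have hint : ∀ (n : ℕ) (k : ℕ), (k : ℝ≥0∞) ≤ 4 → k ≠ 0 →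
      Integrable (fun ω => (F n ω) ^ k) P := by
    intro n k hk hk0
    have hmem : MemLp (F n) k P := (hF4 n).mono_exponent hk
    have h := hmem.integrable_norm_rpow (by exact_mod_cast hk0) (by simp)
    simp only [ENNReal.toReal_natCast, Real.rpow_natCast] at h
    refine h.mono' ((hFm n).pow_const k).aestronglyMeasurable ?_
    filter_upwards with ω
    simp [Real.norm_eq_abs, abs_pow]
  set ε : ℝ := 1 / (4 * c) with hε
  have hεpos : 0 < ε := by positivity
  -- tail sets of μ
  set A : ℕ → Set ℝ := fun k => {x : ℝ | (k : ℝ) ≤ |x|} with hA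
  have hAm : ∀ k, MeasurableSet (A k) :=
    fun k => measurableSet_le measurable_const measurable_abs
  have hanti : Antitone A := by
    intro i j hij x hx
    have h : (i : ℝ) ≤ j := Nat.cast_le.mpr hij
    exact le_trans h hx
  have hiInter : ⋂ k, A k = ∅ := by
    ext x
    simp only [Set.mem_iInter, Set.mem_empty_iff_false, iff_false, not_forall]
    obtain ⟨k, hk⟩ := exists_nat_gt |x|
    exact ⟨k, by simpa [A] using hk⟩
  have htend : Tendsto (fun k => μ (A k)) atTop (nhds 0) := by
    have := tendsto_measure_iInter_atTop (μ := μ) (s := A)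
      (fun k => (hAm k).nullMeasurableSet) hanti ⟨0, measure_ne_top μ _⟩
    simpa [hiInter, Function.comp_def] using this
  obtain ⟨k, hk⟩ := (htend.eventually_lt_const
    (show (0 : ℝ≥0∞) < ENNReal.ofReal (ε / 2) from ENNReal.ofReal_pos.mpr (by positivity))).exists
  have hkμ : (μ (A k)).toReal < ε / 2 := ENNReal.toReal_lt_of_lt_ofReal hk
  -- the test function
  set φ : ℝ → ℝ := fun x => min (max (|x| - k) 0) 1 with hφ
  have hφc : Continuous φ := by
    apply Continuous.min
    · exact Continuous.max (continuous_abs.sub continuous_const) continuous_const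
    · exact continuous_const
  have hφ0 : ∀ x, 0 ≤ φ x := fun x => le_min (le_max_right _ _) zero_le_one
  have hφ1 : ∀ x, φ x ≤ 1 := fun x => min_le_right _ _
  have hφbd : ∀ x, |φ x| ≤ 1 := fun x => abs_le.2 ⟨by linarith [hφ0 x], hφ1 x⟩
  have hφintμ : Integrable φ μ :=
    (integrable_const (1 : ℝ)).mono' hφc.aestronglyMeasurable
      (by filter_upwards with x; simpa [Real.norm_eq_abs] using hφbd x)
  have hφμ : ∫ x, φ x ∂μ < ε / 2 := by
    have h1 : ∫ x, φ x ∂μ ≤ ∫ x, (A k).indicator (fun _ => (1 : ℝ)) x ∂μ := by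
      refine integral_mono hφintμ ((integrable_const (1 : ℝ)).indicator (hAm k)) ?_
      intro x
      by_cases hx : x ∈ A k
      · simp [Set.indicator_of_mem hx, hφ1 x]
      · have : |x| < k := by simpa [A, not_le] using hx
        have : φ x = 0 := by
          simp only [hφ]
          rw [max_eq_right (by linarith)]
          exact min_eq_left zero_le_one
        simp [Set.indicator_of_notMem hx, this]
    have h2 : ∫ x, (A k).indicator (fun _ => (1 : ℝ)) x ∂μ = (μ (A k)).toReal := by
      rw [integral_indicator_const (1 : ℝ) (hAm k)]
      simp [measureReal_def]
    calc ∫ x, φ x ∂μ ≤ (μ (A k)).toReal := h2 ▸ h1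
      _ < ε / 2 := hkμ
  -- eventually the P-integrals of φ ∘ F n are < ε
  have hev : ∀ᶠ n in atTop, ∫ ω, φ (F n ω) ∂P < ε :=
    (hweak φ hφc ⟨1, hφbd⟩).eventually_lt_const (by linarith)
  obtain ⟨N, hN⟩ := eventually_atTop.mp hev
  set R : ℝ := (k : ℝ) + 1 with hR
  have hR1 : (1 : ℝ) ≤ R := by
    have : (0 : ℝ) ≤ (k : ℝ) := Nat.cast_nonneg k
    simp only [hR]; linarith
  -- main bound for n ≥ N
  have hmain : ∀ n, N ≤ n → m n ≤ 2 * R ^ 2 := by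
    intro n hn
    by_contra hcon
    push_neg at hcon
    have hmpos : 0 < m n := lt_of_lt_of_le (by nlinarith) hcon.le
    set S : Set Ω := {ω | R ≤ |F n ω|} with hS
    have hSm : MeasurableSet S := measurableSet_le measurable_const (hFm n).abs
    have hφFint : Integrable (fun ω => φ (F n ω)) P :=
      (integrable_const (1 : ℝ)).mono' (hφc.measurable.comp (hFm n)).aestronglyMeasurable
        (by filter_upwards with ω; simpa [Real.norm_eq_abs] using hφbd (F n ω))
    -- P(S) < ε
    have hPS : (P S).toReal < ε := by
      have h1 : ∫ ω, S.indicator (fun _ => (1 : ℝ)) ω ∂P ≤ ∫ ω, φ (F n ω) ∂P := by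
        refine integral_mono ((integrable_const (1 : ℝ)).indicator hSm) hφFint ?_
        intro ω
        by_cases hω : ω ∈ S
        · have h1' : (1 : ℝ) ≤ |F n ω| - k := by
            have := hω
            simp only [hS, Set.mem_setOf_eq, hR] at this
            linarith
          have : φ (F n ω) = 1 := by
            simp only [hφ]
            rw [max_eq_left (by linarith), min_eq_right h1']
          simp [Set.indicator_of_mem hω, this]
        · simp [Set.indicator_of_notMem hω, hφ0 (F n ω)]
      have h2 : ∫ ω, S.indicator (fun _ => (1 : ℝ)) ω ∂P = (P S).toReal := by
        rw [integral_indicator_const (1 : ℝ) hSm]; simp [measureReal_def]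
      calc (P S).toReal = _ := h2.symm
        _ ≤ ∫ ω, φ (F n ω) ∂P := h1
        _ < ε := hN n hn
    set t : ℝ := 2 * c * m n with ht
    have htpos : 0 < t := by positivity
    set g : Ω → ℝ := S.indicator (fun ω => (F n ω) ^ 2) with hg
    have hgint : Integrable g P := (hint n 2 (by norm_num) (by norm_num)).indicator hSm
    -- m n ≤ R^2 + ∫ g
    have step2 : m n ≤ R ^ 2 + ∫ ω, g ω ∂P := by
      have hpt : ∀ ω, (F n ω) ^ 2 ≤ R ^ 2 + g ω := by
        intro ω
        by_cases hω : ω ∈ S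
        · simp only [hg, Set.indicator_of_mem hω]
          nlinarith
        · have hlt : |F n ω| < R := by simpa [hS, not_le] using hω
          have : (F n ω) ^ 2 ≤ R ^ 2 := by
            rw [← sq_abs]
            nlinarith [abs_nonneg (F n ω)]
          simp only [hg, Set.indicator_of_notMem hω]
          linarith
      have h : ∫ ω, (F n ω) ^ 2 ∂P ≤ ∫ ω, (R ^ 2 + g ω) ∂P :=
        integral_mono (hint n 2 (by norm_num) (by norm_num))
          ((integrable_const (R ^ 2)).add hgint) (fun ω => hpt ω)
      rwa [integral_add (integrable_const _) hgint, integral_const, probReal_univ,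
        one_smul] at h
    -- ∫ g ≤ (∫ F^4)/(2t) + (t/2) P(S)
    have step3 : ∫ ω, g ω ∂P ≤ (∫ ω, (F n ω) ^ 4 ∂P) / (2 * t) + t / 2 * (P S).toReal := by
      have hpt : ∀ ω, g ω ≤ (F n ω) ^ 4 / (2 * t) + t / 2 * S.indicator (fun _ => (1 : ℝ)) ω := by
        intro ω
        by_cases hω : ω ∈ S
        · simp only [hg, Set.indicator_of_mem hω, mul_one]
          have := amgm_aux ((F n ω) ^ 2) t (sq_nonneg _) htpos
          calc (F n ω) ^ 2 ≤ ((F n ω) ^ 2) ^ 2 / (2 * t) + t / 2 := this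
            _ = (F n ω) ^ 4 / (2 * t) + t / 2 := by ring_nf
        · simp only [hg, Set.indicator_of_notMem hω, mul_zero, add_zero]
          positivity
      have h4 : Integrable (fun ω => (F n ω) ^ 4 / (2 * t)
          + t / 2 * S.indicator (fun _ => (1 : ℝ)) ω) P :=
        ((hint n 4 (by norm_num) (by norm_num)).div_const _).add
          (((integrable_const (1 : ℝ)).indicator hSm).const_mul _)
      have := integral_mono hgint h4 (fun ω => hpt ω)
      rwa [integral_add ((hint n 4 (by norm_num) (by norm_num)).div_const _)
          (((integrable_const (1 : ℝ)).indicator hSm).const_mul _),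
        integral_div, integral_const_mul, integral_indicator_const (1 : ℝ) hSm,
        smul_eq_mul, mul_one] at this
    -- put everything together
    have hA4 : (∫ ω, (F n ω) ^ 4 ∂P) / (2 * t) ≤ m n / 4 := by
      have h1 : (∫ ω, (F n ω) ^ 4 ∂P) / (2 * t) ≤ (c * (m n) ^ 2) / (2 * t) :=
        div_le_div_of_nonneg_right (hmom n) (by positivity) |>.trans_eq rfl
      have h2 : (c * (m n) ^ 2) / (2 * t) = m n / 4 := by
        rw [ht]
        field_simp
        ring
      linarith
    have hA5 : t / 2 * (P S).toReal ≤ m n / 4 := by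
      have h1 : t / 2 * (P S).toReal ≤ t / 2 * ε :=
        mul_le_mul_of_nonneg_left hPS.le (by positivity)
      have h2 : t / 2 * ε = m n / 4 := by
        rw [ht, hε]
        field_simp
      linarith
    linarith
  -- finitely many remaining terms
  refine ⟨2 * R ^ 2 + ∑ i ∈ Finset.range N, |m i|, fun n => ?_⟩
  have hsum : 0 ≤ ∑ i ∈ Finset.range N, |m i| :=
    Finset.sum_nonneg fun i _ => abs_nonneg _
  rcases lt_or_ge n N with h | h
  · have h1 : m n ≤ |m n| := le_abs_self _
    have h2 : |m n| ≤ ∑ i ∈ Finset.range N, |m i| :=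
      Finset.single_le_sum (fun i _ => abs_nonneg (m i)) (Finset.mem_range.mpr h)
    nlinarith
  · have := hmain n h
    linarith
end

section
/- Let A ⊆ ℝ be a bounded Borel set, let α > 0, and let p_α denote the centered Gaussian density with standard deviation α. Then for every x ∈ ℝ, | ∫₀^{x} ( 1_A(v) − (1_A * p_α)(v) ) dv | ≤ 2√(2/π) · α, where (1_A * p_α)(v) = ∫_ℝ 1_A(v−y) p_α(y) dy. -/
open MeasureTheory Real

lemma aux_Ioi (b : ℝ) (hb : 0 < b) :
    ∫ x in Set.Ioi (0:ℝ), x * Real.exp (-b * x ^ 2) = (2 * b)⁻¹ := by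
  have hderiv : ∀ x ∈ Set.Ici (0:ℝ),
      HasDerivAt (fun x : ℝ => -(2 * b)⁻¹ * Real.exp (-b * x ^ 2))
        (x * Real.exp (-b * x ^ 2)) x := by
    intro x _
    have h1 : HasDerivAt (fun x : ℝ => -b * x ^ 2) (-b * (2 * x)) x := by
      simpa using ((hasDerivAt_pow 2 x).const_mul (-b))
    have h2 := (Real.hasDerivAt_exp (-b * x ^ 2)).comp x h1
    have h3 := h2.const_mul (-(2 * b)⁻¹)
    convert h3 using 1
    all_goals first | rfl | field_simp
  have htend : Filter.Tendsto (fun x : ℝ => -(2 * b)⁻¹ * Real.exp (-b * x ^ 2))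
      Filter.atTop (nhds 0) := by
    have h1 : Filter.Tendsto (fun x : ℝ => -b * x ^ 2) Filter.atTop Filter.atBot := by
      have := (Filter.tendsto_pow_atTop (n := 2) (by norm_num)).const_mul_atTop_of_neg
        (neg_lt_zero.2 hb)
      simpa using this
    have h2 := Real.tendsto_exp_atBot.comp h1
    simpa using h2.const_mul (-(2 * b)⁻¹)
  have := integral_Ioi_of_hasDerivAt_of_tendsto' hderiv
    (integrable_mul_exp_neg_mul_sq hb).integrableOn htend
  rw [this]
  simp

lemma aux_abs (b : ℝ) (hb : 0 < b) :
    ∫ x : ℝ, |x| * Real.exp (-b * x ^ 2) = b⁻¹ := by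
  have h := integral_comp_abs (f := fun x : ℝ => x * Real.exp (-b * x ^ 2))
  simp only [sq_abs] at h
  rw [h, aux_Ioi b hb]
  rw [mul_inv]
  ring

/-- For a bounded Borel set `A ⊆ ℝ` and `α > 0`,
`|∫₀ˣ (1_A(v) - (1_A * p_α)(v)) dv| ≤ 2√(2/π) α` for every `x ∈ ℝ`, where `p_α` is the
centered Gaussian density with standard deviation `α`. -/
theorem stmt8 (A : Set ℝ) (hA : MeasurableSet A) (hAbdd : Bornology.IsBounded A)
    (α : ℝ) (hα : 0 < α)
    (pα : ℝ → ℝ)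
    (hpα : ∀ x, pα x = (1 / (α * Real.sqrt (2 * Real.pi))) * Real.exp (-(x ^ 2) / (2 * α ^ 2))) :
    ∀ x : ℝ,
      |∫ v in (0 : ℝ)..x,
          (A.indicator (fun _ => (1 : ℝ)) v - ∫ y, A.indicator (fun _ => (1 : ℝ)) (v - y) * pα y)|
        ≤ 2 * Real.sqrt (2 / Real.pi) * α := by
  intro x
  set f : ℝ → ℝ := A.indicator (fun _ => (1 : ℝ)) with hfdef
  set b : ℝ := 1 / (2 * α ^ 2) with hbdef
  set c : ℝ := 1 / (α * Real.sqrt (2 * Real.pi)) with hcdef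
  have hb : 0 < b := by positivity
  have hπ : 0 < Real.pi := Real.pi_pos
  have hsqrt2π : 0 < Real.sqrt (2 * Real.pi) := Real.sqrt_pos.2 (by positivity)
  have hc : 0 < c := by positivity
  have hpα' : pα = fun y => c * Real.exp (-b * y ^ 2) := by
    funext y
    rw [hpα y]
    congr 1
    rw [hbdef]
    field_simp
  have hpα_cont : Continuous pα := by rw [hpα']; fun_prop
  have hpα_nonneg : ∀ y, 0 ≤ pα y := by
    intro y; rw [hpα']
    positivity
  have hpα_int : Integrable pα := by
    rw [hpα']; exact (integrable_exp_neg_mul_sq hb).const_mul c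
  have hα2 : Real.sqrt (2 * Real.pi * α ^ 2) = α * Real.sqrt (2 * Real.pi) := by
    rw [mul_comm, Real.sqrt_mul (by positivity), Real.sqrt_sq hα.le]
  have hnorm : ∫ y, pα y = 1 := by
    rw [hpα']
    rw [integral_const_mul, integral_gaussian]
    have : Real.pi / b = 2 * Real.pi * α ^ 2 := by
      rw [hbdef]; field_simp
    rw [this, hα2, hcdef]
    field_simp
  have habs_val : ∫ y, |y| * pα y = Real.sqrt (2 / Real.pi) * α := by
    have h1 : ∫ y, |y| * pα y = c * ∫ y, |y| * Real.exp (-b * y ^ 2) := by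
      rw [hpα', ← integral_const_mul]
      congr 1; funext y; ring
    rw [h1, aux_abs b hb]
    have hbinv : b⁻¹ = 2 * α ^ 2 := by rw [hbdef]; field_simp
    rw [hbinv, hcdef]
    have e1 : Real.sqrt (2 * Real.pi) = Real.sqrt 2 * Real.sqrt Real.pi :=
      Real.sqrt_mul (by norm_num) _
    have e2 : Real.sqrt (2 / Real.pi) = Real.sqrt 2 / Real.sqrt Real.pi :=
      Real.sqrt_div (by norm_num) _
    have h2 : Real.sqrt 2 * Real.sqrt 2 = 2 := Real.mul_self_sqrt (by norm_num)
    have hπs : 0 < Real.sqrt Real.pi := Real.sqrt_pos.2 hπ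
    have hs2 : (0:ℝ) < Real.sqrt 2 := by positivity
    rw [e1, e2]
    field_simp
    nlinarith [h2, hπs, hs2, sq_nonneg α, mul_pos hπs hs2, sq_nonneg (Real.sqrt Real.pi * α)]
  -- basic facts about f
  have hf_meas : Measurable f := (measurable_const.indicator hA)
  have hf_int : Integrable f := by
    rw [hfdef, integrable_indicator_iff hA]
    exact integrableOn_const hAbdd.measure_lt_top.ne
  have hf_bd : ∀ v, ‖f v‖ ≤ 1 := by
    intro v
    rw [hfdef]
    rcases Set.indicator_eq_zero_or_self A (fun _ => (1:ℝ)) v with h | h <;> rw [h] <;> norm_num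
  have hf_ii : ∀ a b : ℝ, IntervalIntegrable f volume a b := fun a b =>
    hf_int.intervalIntegrable
  set F : ℝ → ℝ := fun t => ∫ u in (0:ℝ)..t, f u with hFdef
  have hF_cont : Continuous F := intervalIntegral.continuous_primitive hf_ii 0
  have hF0 : F 0 = 0 := intervalIntegral.integral_same
  have hFsub : ∀ s t : ℝ, F t - F s = ∫ u in s..t, f u := by
    intro s t
    exact intervalIntegral.integral_interval_sub_left (hf_ii 0 t) (hf_ii 0 s)
  have hlip : ∀ s t : ℝ, |F t - F s| ≤ |t - s| := by
    intro s t
    rw [hFsub s t]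
    have := intervalIntegral.norm_integral_le_of_norm_le_const
      (C := 1) (f := f) (a := s) (b := t) (fun u _ => hf_bd u)
    simpa using this
  -- the convolution g
  set g : ℝ → ℝ := fun v => ∫ y, f (v - y) * pα y with hgdef
  have hinner_int : ∀ v, Integrable (fun y => f (v - y) * pα y) := by
    intro v
    refine hpα_int.mono' ?_ (ae_of_all _ fun y => ?_)
    · exact ((hf_meas.comp (measurable_const.sub measurable_id)).mul
        hpα_cont.measurable).aestronglyMeasurable
    · rw [norm_mul]
      calc ‖f (v - y)‖ * ‖pα y‖ ≤ 1 * ‖pα y‖ :=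
            mul_le_mul_of_nonneg_right (hf_bd _) (norm_nonneg _)
        _ = ‖pα y‖ := one_mul _
        _ = pα y := abs_of_nonneg (hpα_nonneg y)
  have hg_bd : ∀ v, ‖g v‖ ≤ 1 := by
    intro v
    rw [hgdef]
    calc ‖∫ y, f (v - y) * pα y‖ ≤ ∫ y, ‖f (v - y) * pα y‖ := norm_integral_le_integral_norm _
      _ ≤ ∫ y, pα y := by
          refine integral_mono (hinner_int v).norm hpα_int fun y => ?_
          rw [norm_mul]
          calc ‖f (v - y)‖ * ‖pα y‖ ≤ 1 * ‖pα y‖ :=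
                mul_le_mul_of_nonneg_right (hf_bd _) (norm_nonneg _)
            _ = pα y := by rw [one_mul]; exact abs_of_nonneg (hpα_nonneg y)
      _ = 1 := hnorm
  have hg_meas : StronglyMeasurable g := by
    have : StronglyMeasurable (fun p : ℝ × ℝ => f (p.1 - p.2) * pα p.2) :=
      ((hf_meas.comp (measurable_fst.sub measurable_snd)).mul
        (hpα_cont.measurable.comp measurable_snd)).stronglyMeasurable
    exact this.integral_prod_right'
  have hg_ii : ∀ a b : ℝ, IntervalIntegrable g volume a b := by
    intro a b
    rw [intervalIntegrable_iff]
    exact Measure.integrableOn_of_bounded (by exact (measure_Ioc_lt_top).ne)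
      hg_meas.aestronglyMeasurable (ae_of_all _ fun v => hg_bd v)
  -- Fubini swap
  have main : ∀ a b : ℝ, a ≤ b →
      ∫ v in a..b, g v = ∫ y, pα y * (F (b - y) - F (a - y)) := by
    intro a b hab
    have hint : Integrable (Function.uncurry fun v y => f (v - y) * pα y)
        ((volume.restrict (Set.Ioc a b)).prod volume) := by
      have h1 : Integrable (fun _ : ℝ => (1:ℝ)) (volume.restrict (Set.Ioc a b)) :=
        integrableOn_const measure_Ioc_lt_top.ne
      refine (h1.mul_prod hpα_int).mono' ?_ (ae_of_all _ fun p => ?_)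
      · exact ((hf_meas.comp (measurable_fst.sub measurable_snd)).mul
          (hpα_cont.measurable.comp measurable_snd)).aestronglyMeasurable
      · simp only [Function.uncurry]
        rw [norm_mul]
        calc ‖f (p.1 - p.2)‖ * ‖pα p.2‖ ≤ 1 * ‖pα p.2‖ :=
              mul_le_mul_of_nonneg_right (hf_bd _) (norm_nonneg _)
          _ = 1 * pα p.2 := by rw [Real.norm_eq_abs, abs_of_nonneg (hpα_nonneg _)]
    rw [intervalIntegral.integral_of_le hab]
    rw [hgdef]
    rw [MeasureTheory.integral_integral_swap hint]
    congr 1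
    funext y
    rw [← intervalIntegral.integral_of_le hab]
    rw [intervalIntegral.integral_mul_const]
    rw [intervalIntegral.integral_comp_sub_right f y]
    rw [← hFsub (a - y) (b - y)]
    ring
  have swap : ∫ v in (0:ℝ)..x, g v = ∫ y, pα y * (F (x - y) - F (-y)) := by
    rcases le_total 0 x with h | h
    · have := main 0 x h
      simpa using this
    · rw [intervalIntegral.integral_symm, main x 0 h, ← integral_neg]
      congr 1
      funext y
      have : (0:ℝ) - y = -y := zero_sub y
      rw [this]
      ring
  -- integrability of the pieces
  have hint1 : Integrable (fun y => pα y * (F (x - y) - F (-y))) := by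
    refine (hpα_int.mul_const |x|).mono' ?_ (ae_of_all _ fun y => ?_)
    · exact (hpα_cont.mul ((hF_cont.comp (continuous_const.sub continuous_id)).sub
        (hF_cont.comp continuous_neg))).aestronglyMeasurable
    · rw [norm_mul, Real.norm_eq_abs (pα y), abs_of_nonneg (hpα_nonneg y)]
      have h1 : ‖F (x - y) - F (-y)‖ ≤ |x| := by
        have := hlip (-y) (x - y)
        simpa using this
      calc pα y * ‖F (x - y) - F (-y)‖ ≤ pα y * |x| :=
            mul_le_mul_of_nonneg_left h1 (hpα_nonneg y)
        _ = pα y * |x| := rfl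
  have hint0 : Integrable (fun y => pα y * F x) := hpα_int.mul_const _
  have hsplit : ∫ v in (0:ℝ)..x, (f v - g v)
      = ∫ y, (pα y * F x - pα y * (F (x - y) - F (-y))) := by
    rw [intervalIntegral.integral_sub (hf_ii 0 x) (hg_ii 0 x), swap]
    rw [integral_sub hint0 hint1]
    congr 1
    rw [integral_mul_const, hnorm, one_mul]
  rw [hsplit]
  have habs_int : Integrable (fun y => 2 * (|y| * pα y)) := by
    have : Integrable (fun y => |y| * pα y) := by
      rw [hpα']
      have h0 : Integrable (fun y : ℝ => c * (|y| * Real.exp (-b * y ^ 2))) := by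
        refine Integrable.const_mul ?_ c
        have := (integrable_mul_exp_neg_mul_sq hb).abs
        refine this.congr (ae_of_all _ fun y => ?_)
        show |y * Real.exp (-b * y ^ 2)| = |y| * Real.exp (-b * y ^ 2)
        rw [abs_mul, abs_of_nonneg (Real.exp_pos _).le]
      refine h0.congr (ae_of_all _ fun y => ?_)
      ring
    exact this.const_mul 2
  calc |∫ y, (pα y * F x - pα y * (F (x - y) - F (-y)))|
      ≤ ∫ y, |pα y * F x - pα y * (F (x - y) - F (-y))| :=
        by
          have := norm_integral_le_integral_norm (μ := volume)
            (fun y => pα y * F x - pα y * (F (x - y) - F (-y)))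
          simpa [Real.norm_eq_abs] using this
    _ ≤ ∫ y, 2 * (|y| * pα y) := by
        refine integral_mono (hint0.sub hint1).abs habs_int fun y => ?_
        have e : pα y * F x - pα y * (F (x - y) - F (-y))
            = pα y * ((F x - F (x - y)) + (F (-y) - F 0)) := by rw [hF0]; ring
        rw [e, abs_mul, abs_of_nonneg (hpα_nonneg y)]
        have b1 : |F x - F (x - y)| ≤ |y| := by
          have := hlip (x - y) x
          simpa using this
        have b2 : |F (-y) - F 0| ≤ |y| := by
          have := hlip 0 (-y)
          simpa using this
        have : |(F x - F (x - y)) + (F (-y) - F 0)| ≤ 2 * |y| := by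
          calc |(F x - F (x - y)) + (F (-y) - F 0)|
              ≤ |F x - F (x - y)| + |F (-y) - F 0| := abs_add_le _ _
            _ ≤ |y| + |y| := add_le_add b1 b2
            _ = 2 * |y| := by ring
        calc pα y * |(F x - F (x - y)) + (F (-y) - F 0)| ≤ pα y * (2 * |y|) :=
              mul_le_mul_of_nonneg_left this (hpα_nonneg y)
          _ = 2 * (|y| * pα y) := by ring
    _ = 2 * (Real.sqrt (2 / Real.pi) * α) := by rw [integral_const_mul, habs_val]
    _ = 2 * Real.sqrt (2 / Real.pi) * α := by ring
end

section
/- Let d ≥ 1, M ≥ 1, and let φ : ℝ^d → ℝ be a continuous function with support contained in [−M, M]^d. Define T[φ](x₁,…,x_d) = ∫₀^{x₁} ⋯ ∫₀^{x_d} φ(t₁,…,t_d) dt_d ⋯ dt₁. Then for all x, y ∈ ℝ^d, |T[φ](x) − T[φ](y)| ≤ M^{d−1} · ‖φ‖_∞ · Σ_{i=1}^d |x_i − y_i|. -/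
open MeasureTheory

/-- The iterated signed one-dimensional integral of `φ` in its first `k` coordinates:
`iterT d k φ x = ∫₀^{x₁} ⋯ ∫₀^{x_k} φ(t₁,…,t_k, x_{k+1},…,x_d) dt_k ⋯ dt₁`. In particular
`iterT d d φ x = T[φ](x) = ∫₀^{x₁} ⋯ ∫₀^{x_d} φ(t₁,…,t_d) dt_d ⋯ dt₁`. -/
noncomputable def iterT (d : ℕ) : ℕ → ((Fin d → ℝ) → ℝ) → (Fin d → ℝ) → ℝ
  | 0, φ, x => φ x
  | (k + 1), φ, x =>
    if h : k < d then
      ∫ t in (0 : ℝ)..(x ⟨k, h⟩), iterT d k φ (Function.update x ⟨k, h⟩ t)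
    else iterT d k φ x

section Aux

variable {d : ℕ} {φ : (Fin d → ℝ) → ℝ} {M : ℝ}

/-- Continuity of the iterated integral. -/
lemma iterT_continuous (hφc : Continuous φ) : ∀ k, Continuous (iterT d k φ)
  | 0 => hφc
  | (k + 1) => by
    have ih := iterT_continuous hφc k
    show Continuous fun x => iterT d (k+1) φ x
    unfold iterT
    by_cases h : k < d
    · simp only [dif_pos h]
      exact intervalIntegral.continuous_parametric_intervalIntegral_of_continuous
        (f := fun x t => iterT d k φ (Function.update x ⟨k, h⟩ t))
        (ih.comp (continuous_fst.update (⟨k, h⟩ : Fin d) continuous_snd))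
        (continuous_apply (⟨k, h⟩ : Fin d))
    · simpa only [dif_neg h] using ih

/-- Vanishing of the iterated integral when a not-yet-integrated
coordinate lies outside `[-M, M]`. -/
lemma iterT_eq_zero
    (hφsupp : Function.support φ ⊆ Set.Icc (fun _ => -M) (fun _ => M)) :
    ∀ k, ∀ z : Fin d → ℝ, ∀ j : Fin d, k ≤ (j : ℕ) → M < |z j| → iterT d k φ z = 0
  | 0, z, j, _, hz => by
    show φ z = 0
    by_contra h
    have hmem := hφsupp h
    have h1 := hmem.1 j
    have h2 := hmem.2 j
    simp only at h1 h2
    rcases lt_abs.mp hz with h' | h' <;> linarith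
  | (k + 1), z, j, hkj, hz => by
    have hkj' : k ≤ (j : ℕ) := Nat.le_of_succ_le hkj
    show iterT d (k+1) φ z = 0
    unfold iterT
    by_cases h : k < d
    · simp only [dif_pos h]
      have hne : (⟨k, h⟩ : Fin d) ≠ j := by
        intro he
        rw [← he] at hkj
        exact absurd hkj (by simp)
      have : ∀ t : ℝ, iterT d k φ (Function.update z ⟨k, h⟩ t) = 0 := by
        intro t
        apply iterT_eq_zero hφsupp k _ j hkj'
        rwa [Function.update_of_ne hne.symm]
      simp only [this, intervalIntegral.integral_zero]
    · simp only [dif_neg h]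
      exact iterT_eq_zero hφsupp k z j hkj' hz

/-- Key integral estimate: a continuous function vanishing outside `[-M,M]`
and bounded by `B` has `|∫₀^a g| ≤ M * B`, uniformly in `a`. -/
lemma key_int_bound (g : ℝ → ℝ) (hg : Continuous g) (M a B : ℝ) (hM : 0 ≤ M)
    (hB : ∀ t, |g t| ≤ B) (h0 : ∀ t, M < |t| → g t = 0) :
    |∫ t in (0 : ℝ)..a, g t| ≤ M * B := by
  have hB0 : 0 ≤ B := le_trans (abs_nonneg _) (hB 0)
  set a' : ℝ := max (-M) (min a M) with ha'
  have h1 : -M ≤ a' := le_max_left _ _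
  have h2 : a' ≤ M := max_le (by linarith) (min_le_right _ _)
  have hz : (∫ t in a'..a, g t) = 0 := by
    rcases le_total a M with hle | hlt
    · rcases le_total (-M) a with hge | hge
      · have : a' = a := by rw [ha', min_eq_left hle, max_eq_right hge]
        rw [this, intervalIntegral.integral_same]
      · -- a ≤ -M, a' = -M
        have haa' : a' = -M := by
          rw [ha', min_eq_left hle]
          exact max_eq_left (by linarith)
        rw [haa', ← neg_eq_zero, ← intervalIntegral.integral_symm,
          intervalIntegral.integral_of_le hge, integral_Ioc_eq_integral_Ioo]
        apply setIntegral_eq_zero_of_forall_eq_zero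
        intro t ht
        exact h0 t (by rw [abs_of_nonpos (by linarith [ht.2])]; linarith [ht.2])
    · -- M ≤ a, a' = M
      have haa' : a' = M := by
        rw [ha', min_eq_right hlt]
        exact max_eq_right (by linarith)
      rw [haa', intervalIntegral.integral_of_le hlt, integral_Ioc_eq_integral_Ioo]
      apply setIntegral_eq_zero_of_forall_eq_zero
      intro t ht
      exact h0 t (by rw [abs_of_pos (by linarith [ht.1])]; exact ht.1)
  have hsplit : (∫ t in (0 : ℝ)..a, g t) = (∫ t in (0 : ℝ)..a', g t) + ∫ t in a'..a, g t :=
    (intervalIntegral.integral_add_adjacent_intervals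
      (hg.intervalIntegrable _ _) (hg.intervalIntegrable _ _)).symm
  rw [hsplit, hz, add_zero]
  have hn : ‖∫ t in (0 : ℝ)..a', g t‖ ≤ B * |a' - 0| :=
    intervalIntegral.norm_integral_le_of_norm_le_const
      (fun t _ => by rw [Real.norm_eq_abs]; exact hB t)
  rw [Real.norm_eq_abs] at hn
  calc |∫ t in (0 : ℝ)..a', g t| ≤ B * |a' - 0| := hn
    _ ≤ B * M := by
        apply mul_le_mul_of_nonneg_left _ hB0
        rw [sub_zero, abs_le]
        exact ⟨h1, h2⟩
    _ = M * B := mul_comm _ _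

end Aux

/-- For continuous `φ : ℝ^d → ℝ` supported in `[-M, M]^d` (`M ≥ 1`),
the function `T[φ]` is Lipschitz for the `ℓ¹`-norm:
`|T[φ](x) - T[φ](y)| ≤ M^{d-1} ‖φ‖_∞ Σᵢ |xᵢ - yᵢ|`. -/
theorem stmt10 (d : ℕ) (hd : 1 ≤ d) (M : ℝ) (hM : 1 ≤ M)
    (φ : (Fin d → ℝ) → ℝ) (hφc : Continuous φ)
    (hφsupp : Function.support φ ⊆ Set.Icc (fun _ => -M) (fun _ => M))
    (x y : Fin d → ℝ) :
    |iterT d d φ x - iterT d d φ y| ≤ M ^ (d - 1) * (⨆ z, |φ z|) * ∑ i, |x i - y i| := by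
  have hM0 : (0 : ℝ) ≤ M := by linarith
  set C : ℝ := ⨆ z, |φ z| with hC
  -- boundedness of |φ|
  have hcs : HasCompactSupport φ := by
    apply HasCompactSupport.of_support_subset_isCompact (isCompact_Icc
      (a := fun _ : Fin d => -M) (b := fun _ : Fin d => M)) hφsupp
  have hbdd : BddAbove (Set.range fun z => |φ z|) := by
    obtain ⟨B, hB⟩ := (hφc.abs).bounded_above_of_compact_support hcs.abs
    refine ⟨B, ?_⟩
    rintro _ ⟨z, rfl⟩
    have := hB z
    rwa [Real.norm_eq_abs, abs_abs] at this
  have hCb : ∀ z, |φ z| ≤ C := fun z => le_ciSup hbdd z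
  have hC0 : 0 ≤ C := le_trans (abs_nonneg _) (hCb x)
  -- global bound on iterated integrals
  have hbound : ∀ k, k ≤ d → ∀ z : Fin d → ℝ, |iterT d k φ z| ≤ M ^ k * C := by
    intro k
    induction k with
    | zero => intro _ z; simpa [iterT] using hCb z
    | succ k ih =>
      intro hk z
      have hkd : k < d := lt_of_lt_of_le (Nat.lt_succ_self k) hk
      have ih' := ih (Nat.le_of_succ_le hk)
      show |iterT d (k+1) φ z| ≤ M ^ (k+1) * C
      unfold iterT
      simp only [dif_pos hkd]
      have hcont : Continuous fun t => iterT d k φ (Function.update z ⟨k, hkd⟩ t) :=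
        (iterT_continuous hφc k).comp (continuous_const.update (⟨k, hkd⟩ : Fin d) continuous_id)
      have := key_int_bound _ hcont M (z ⟨k, hkd⟩) (M ^ k * C) hM0
        (fun t => ih' _)
        (fun t ht => iterT_eq_zero hφsupp k _ ⟨k, hkd⟩ le_rfl (by rwa [Function.update_self]))
      calc |∫ t in (0:ℝ)..(z ⟨k, hkd⟩), iterT d k φ (Function.update z ⟨k, hkd⟩ t)|
          ≤ M * (M ^ k * C) := this
        _ = M ^ (k+1) * C := by ring
  -- single-coordinate Lipschitz estimate
  have hsingle : ∀ k, k ≤ d → ∀ i : Fin d, (i : ℕ) < k → ∀ z : Fin d → ℝ, ∀ s : ℝ,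
      |iterT d k φ z - iterT d k φ (Function.update z i s)| ≤ M ^ (k - 1) * C * |z i - s| := by
    intro k
    induction k with
    | zero => intro _ i hi; exact absurd hi (Nat.not_lt_zero _)
    | succ k ih =>
      intro hk i hi z s
      have hkd : k < d := lt_of_lt_of_le (Nat.lt_succ_self k) hk
      show |iterT d (k+1) φ z - iterT d (k+1) φ (Function.update z i s)| ≤ _
      unfold iterT
      simp only [dif_pos hkd]
      rcases Nat.lt_succ_iff_lt_or_eq.mp hi with hik | hik
      · -- i < k : inductive step
        have hne : i ≠ (⟨k, hkd⟩ : Fin d) := by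
          intro h; rw [h] at hik; exact absurd hik (by simp)
        have hzk : (Function.update z i s) ⟨k, hkd⟩ = z ⟨k, hkd⟩ :=
          Function.update_of_ne hne.symm _ _
        have hupd : ∀ t : ℝ, Function.update (Function.update z i s) ⟨k, hkd⟩ t
            = Function.update (Function.update z ⟨k, hkd⟩ t) i s := fun t =>
          Function.update_comm hne s t z
        rw [hzk]
        have hcont1 : Continuous fun t => iterT d k φ (Function.update z ⟨k, hkd⟩ t) :=
          (iterT_continuous hφc k).comp (continuous_const.update (⟨k, hkd⟩ : Fin d) continuous_id)
        have hcont2 : Continuous fun t =>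
            iterT d k φ (Function.update (Function.update z ⟨k, hkd⟩ t) i s) :=
          by
          have hu1 : Continuous fun t : ℝ => Function.update z (⟨k, hkd⟩ : Fin d) t :=
            continuous_const.update _ continuous_id
          have hu2 : Continuous fun t : ℝ =>
              Function.update (Function.update z (⟨k, hkd⟩ : Fin d) t) i s :=
            hu1.update i continuous_const
          exact (iterT_continuous hφc k).comp hu2
        have hsub : (∫ t in (0:ℝ)..(z ⟨k, hkd⟩), iterT d k φ (Function.update z ⟨k, hkd⟩ t))
            - (∫ t in (0:ℝ)..(z ⟨k, hkd⟩),
                iterT d k φ (Function.update (Function.update z i s) ⟨k, hkd⟩ t))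
            = ∫ t in (0:ℝ)..(z ⟨k, hkd⟩),
                (iterT d k φ (Function.update z ⟨k, hkd⟩ t)
                  - iterT d k φ (Function.update (Function.update z ⟨k, hkd⟩ t) i s)) := by
          simp only [hupd]
          rw [intervalIntegral.integral_sub (hcont1.intervalIntegrable _ _)
            (hcont2.intervalIntegrable _ _)]
        rw [hsub]
        have hgbd : ∀ t : ℝ,
            |iterT d k φ (Function.update z ⟨k, hkd⟩ t)
              - iterT d k φ (Function.update (Function.update z ⟨k, hkd⟩ t) i s)|
            ≤ M ^ (k - 1) * C * |z i - s| := by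
          intro t
          have := ih (Nat.le_of_succ_le hk) i hik (Function.update z ⟨k, hkd⟩ t) s
          rwa [Function.update_of_ne hne _ _] at this
        have hg0 : ∀ t : ℝ, M < |t| →
            iterT d k φ (Function.update z ⟨k, hkd⟩ t)
              - iterT d k φ (Function.update (Function.update z ⟨k, hkd⟩ t) i s) = 0 := by
          intro t ht
          have h1 : iterT d k φ (Function.update z ⟨k, hkd⟩ t) = 0 :=
            iterT_eq_zero hφsupp k _ ⟨k, hkd⟩ le_rfl (by rwa [Function.update_self])
          have h2 : iterT d k φ (Function.update (Function.update z ⟨k, hkd⟩ t) i s) = 0 := by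
            apply iterT_eq_zero hφsupp k _ ⟨k, hkd⟩ le_rfl
            rwa [Function.update_of_ne hne.symm, Function.update_self]
          rw [h1, h2, sub_zero]
        have := key_int_bound _ (hcont1.sub hcont2) M (z ⟨k, hkd⟩)
          (M ^ (k - 1) * C * |z i - s|) hM0 hgbd hg0
        calc |∫ t in (0:ℝ)..(z ⟨k, hkd⟩),
              (iterT d k φ (Function.update z ⟨k, hkd⟩ t)
                - iterT d k φ (Function.update (Function.update z ⟨k, hkd⟩ t) i s))|
            ≤ M * (M ^ (k - 1) * C * |z i - s|) := this
          _ = M ^ (k - 1 + 1) * C * |z i - s| := by ring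
          _ = M ^ (k + 1 - 1) * C * |z i - s| := by
              have hee : k - 1 + 1 = k + 1 - 1 := by omega
              rw [hee]
      · -- i = k : base case
        have hik' : i = (⟨k, hkd⟩ : Fin d) := Fin.ext hik
        rw [← hik']
        have hzk : (Function.update z i s) i = s := Function.update_self _ _ _
        have hupd : ∀ t : ℝ, Function.update (Function.update z i s) i t
            = Function.update z i t := fun t => Function.update_idem s t z
        rw [hzk]
        simp only [hupd]
        have hcontb : Continuous fun t : ℝ => iterT d k φ (Function.update z i t) :=
          (iterT_continuous hφc k).comp (continuous_const.update i continuous_id)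
        rw [intervalIntegral.integral_interval_sub_left
          (hcontb.intervalIntegrable _ _) (hcontb.intervalIntegrable _ _)]
        have hn : ‖∫ t in s..(z i), iterT d k φ (Function.update z i t)‖
            ≤ (M ^ k * C) * |z i - s| :=
          intervalIntegral.norm_integral_le_of_norm_le_const
            (fun t _ => by rw [Real.norm_eq_abs]; exact hbound k (Nat.le_of_succ_le hk) _)
        rw [Real.norm_eq_abs] at hn
        calc |∫ t in s..(z i), iterT d k φ (Function.update z i t)|
            ≤ M ^ k * C * |z i - s| := hn
          _ = M ^ (k + 1 - 1) * C * |z i - s| := by rw [Nat.add_sub_cancel]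
  -- telescoping
  set w : ℕ → (Fin d → ℝ) := fun j i => if (i : ℕ) < j then y i else x i with hw
  have hw0 : w 0 = x := by funext i; simp [hw]
  have hwd : w d = y := by funext i; simp [hw, i.isLt]
  have hwstep : ∀ j, ∀ hj : j < d,
      w (j + 1) = Function.update (w j) ⟨j, hj⟩ (y ⟨j, hj⟩) := by
    intro j hj
    funext i
    rcases eq_or_ne i (⟨j, hj⟩ : Fin d) with h | h
    · subst h
      simp [hw, Function.update_self]
    · rw [Function.update_of_ne h]
      have hne : (i : ℕ) ≠ j := fun hh => h (Fin.ext hh)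
      simp only [hw]
      have : (i : ℕ) < j + 1 ↔ (i : ℕ) < j := by omega
      rw [if_congr this rfl rfl]
  have hwj : ∀ j, ∀ hj : j < d, (w j) ⟨j, hj⟩ = x ⟨j, hj⟩ := by
    intro j hj
    simp [hw]
  set F : ℕ → ℝ := fun j => iterT d d φ (w j) with hF
  have htel : iterT d d φ x - iterT d d φ y = ∑ j ∈ Finset.range d, (F j - F (j + 1)) := by
    rw [Finset.sum_range_sub' F, hF]
    simp [hw0, hwd]
  set f : ℕ → ℝ := fun j =>
    if hj : j < d then M ^ (d - 1) * C * |x ⟨j, hj⟩ - y ⟨j, hj⟩| else 0 with hf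
  have hterm : ∀ j ∈ Finset.range d, |F j - F (j + 1)| ≤ f j := by
    intro j hj
    have hjd : j < d := Finset.mem_range.mp hj
    rw [hf]
    simp only [dif_pos hjd]
    have := hsingle d le_rfl ⟨j, hjd⟩ hjd (w j) (y ⟨j, hjd⟩)
    rw [← hwstep j hjd, hwj j hjd] at this
    exact this
  calc |iterT d d φ x - iterT d d φ y|
      = |∑ j ∈ Finset.range d, (F j - F (j + 1))| := by rw [htel]
    _ ≤ ∑ j ∈ Finset.range d, |F j - F (j + 1)| := Finset.abs_sum_le_sum_abs _ _
    _ ≤ ∑ j ∈ Finset.range d, f j := Finset.sum_le_sum hterm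
    _ = ∑ i : Fin d, f i := (Fin.sum_univ_eq_sum_range f d).symm
    _ = ∑ i : Fin d, M ^ (d - 1) * C * |x i - y i| := by
        apply Finset.sum_congr rfl
        intro i _
        rw [hf]
        simp [i.isLt]
    _ = M ^ (d - 1) * C * ∑ i, |x i - y i| := by rw [Finset.mul_sum]
end
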